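/- Let q ≥ 2 and let G be the thick headless spider of order q: the graph on vertices u₁, …, u_q, v₁, …, v_q where {u₁, …, u_q} is a clique, {v₁, …, v_q} is a stable set, and the edges between the two sets are exactly (u_i, v_j) for all i, j ∈ {1, …, q} with i ≠ j. Then η(G) = ⌈(q + 1)/2⌉. -/

import Mathlib

open Classical in
/-- Sum of the labels `f` over the open neighborhood of `v` in `G`. -/
noncomputable def nbrSum {V : Type*} [Fintype V] (G : SimpleGraph V) (f : V → ℕ) (v : V) : ℕ :=
  ∑ w ∈ Finset.univ.filter (fun w => G.Adj v w), f w

open Classical in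
/-- The degree of `v` in `G`. -/
noncomputable def deg {V : Type*} [Fintype V] (G : SimpleGraph V) (v : V) : ℕ :=
  (Finset.univ.filter (fun w => G.Adj v w)).card

/-- `f : V → {1,…,k}` is an additive `k`-coloring of `G`: labels lie in `{1,…,k}` and
adjacent vertices get distinct open-neighborhood sums. -/
def IsAdditiveColoring {V : Type*} [Fintype V] (G : SimpleGraph V) (k : ℕ) (f : V → ℕ) : Prop :=
  (∀ v, 1 ≤ f v ∧ f v ≤ k) ∧ ∀ u v, G.Adj u v → nbrSum G f u ≠ nbrSum G f v

/-- The additive chromatic number `η(G)`: the least `k` admitting an additive `k`-coloring. -/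
noncomputable def eta {V : Type*} [Fintype V] (G : SimpleGraph V) : ℕ :=
  sInf {k | ∃ f : V → ℕ, IsAdditiveColoring G k f}

/-- The thick headless spider of order `q`: `Sum.inl i` is the clique vertex `uᵢ`,
`Sum.inr i` is the stable-set vertex `vᵢ`, and `uᵢ` is adjacent to `vⱼ` iff `i ≠ j`. -/
def thickSpider (q : ℕ) : SimpleGraph (Fin q ⊕ Fin q) where
  Adj x y :=
    match x, y with
    | Sum.inl i, Sum.inl j => i ≠ j
    | Sum.inl i, Sum.inr j => i ≠ j
    | Sum.inr i, Sum.inl j => i ≠ j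
    | Sum.inr _, Sum.inr _ => False
  symm := by
    constructor
    rintro (i | i) (j | j) h
    · exact fun e => h e.symm
    · exact fun e => h e.symm
    · exact fun e => h e.symm
    · exact h.elim
  loopless := by
    constructor
    rintro (i | i) h
    · exact h rfl
    · exact h


open Finset

lemma sum_ite_ne {q : ℕ} (g : Fin q → ℕ) (i : Fin q) [∀ j, Decidable (i ≠ j)] :
    (∑ j, if i ≠ j then g j else 0) = ∑ j ∈ univ.erase i, g j := by
  classical
  rw [← Finset.sum_filter]
  congr 1
  ext j
  simp [ne_comm, eq_comm]

lemma nbrSum_inl {q : ℕ} (f : Fin q ⊕ Fin q → ℕ) (i : Fin q) :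
    nbrSum (thickSpider q) f (Sum.inl i) =
      (∑ j ∈ univ.erase i, f (Sum.inl j)) + ∑ j ∈ univ.erase i, f (Sum.inr j) := by
  classical
  rw [nbrSum, Finset.sum_filter, Fintype.sum_sum_type]
  have h1 : ∀ j : Fin q, (thickSpider q).Adj (Sum.inl i) (Sum.inl j) ↔ i ≠ j := fun j => Iff.rfl
  have h2 : ∀ j : Fin q, (thickSpider q).Adj (Sum.inl i) (Sum.inr j) ↔ i ≠ j := fun j => Iff.rfl
  simp only [h1, h2]
  rw [sum_ite_ne, sum_ite_ne]

lemma nbrSum_inr {q : ℕ} (f : Fin q ⊕ Fin q → ℕ) (i : Fin q) :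
    nbrSum (thickSpider q) f (Sum.inr i) = ∑ j ∈ univ.erase i, f (Sum.inl j) := by
  classical
  rw [nbrSum, Finset.sum_filter, Fintype.sum_sum_type]
  have h1 : ∀ j : Fin q, (thickSpider q).Adj (Sum.inr i) (Sum.inl j) ↔ i ≠ j := fun j => Iff.rfl
  have h2 : ∀ j : Fin q, (thickSpider q).Adj (Sum.inr i) (Sum.inr j) ↔ False := fun j => Iff.rfl
  simp only [h1, h2, if_false]
  rw [sum_ite_ne]
  simp

lemma erase_sum_eq {q : ℕ} (g : Fin q → ℕ) (i : Fin q) :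
    (∑ j ∈ univ.erase i, g j) + g i = ∑ j, g j :=
  Finset.sum_erase_add _ _ (mem_univ i)

/-- The thick headless spider admits an additive coloring with `(q+2)/2` colors. -/
lemma thickSpider_coloring (q : ℕ) (hq : 2 ≤ q) :
    ∃ f : Fin q ⊕ Fin q → ℕ, IsAdditiveColoring (thickSpider q) ((q + 2) / 2) f := by
  classical
  set k : ℕ := (q + 2) / 2 with hk
  have hk2 : 2 ≤ k := by omega
  have h2k : q + 1 ≤ 2 * k ∧ 2 * k ≤ q + 2 := by constructor <;> omega
  set a : Fin q → ℕ := fun i => if (i : ℕ) + 2 ≤ k + 1 then 1 else (i : ℕ) + 2 - k with ha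
  set b : Fin q → ℕ := fun i => if (i : ℕ) + 2 ≤ k + 1 then (i : ℕ) + 1 else k with hb
  have hab : ∀ i : Fin q, a i + b i = (i : ℕ) + 2 := by
    intro i
    have := i.isLt
    simp only [ha, hb]
    split <;> omega
  have haB : ∀ i : Fin q, 1 ≤ a i ∧ a i ≤ k := by
    intro i
    have := i.isLt
    simp only [ha]
    split <;> omega
  have hbB : ∀ i : Fin q, 1 ≤ b i ∧ b i ≤ k := by
    intro i
    have := i.isLt
    simp only [hb]
    split <;> omega
  -- T = ∑ b ≥ q + 1
  have hT : q + 1 ≤ ∑ j, b j := by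
    set i1 : Fin q := ⟨1, by omega⟩ with hi1
    have hb1 : b i1 = 2 := by simp only [hb, hi1]; norm_num; omega
    have h1 : (∑ j ∈ univ.erase i1, b j) + b i1 = ∑ j, b j := erase_sum_eq b i1
    have h2 : (univ.erase i1).card ≤ ∑ j ∈ univ.erase i1, b j := by
      have := Finset.card_nsmul_le_sum (univ.erase i1) b 1 (fun j _ => (hbB j).1)
      simpa using this
    have h3 : (univ.erase i1).card = q - 1 := by
      rw [Finset.card_erase_of_mem (mem_univ i1)]; simp
    omega
  refine ⟨Sum.elim a b, fun v => ?_, fun u v huv => ?_⟩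
  · rcases v with i | i
    · exact haB i
    · exact hbB i
  · rcases u with i | i <;> rcases v with j | j
    · -- clique edge
      have hij : i ≠ j := huv
      rw [nbrSum_inl, nbrSum_inl]
      simp only [Sum.elim_inl, Sum.elim_inr]
      have e1 := erase_sum_eq a i
      have e2 := erase_sum_eq b i
      have e3 := erase_sum_eq a j
      have e4 := erase_sum_eq b j
      have hv : (i : ℕ) ≠ (j : ℕ) := fun h => hij (Fin.val_injective h)
      have := hab i; have := hab j
      omega
    · have hij : i ≠ j := huv
      rw [nbrSum_inl, nbrSum_inr]
      simp only [Sum.elim_inl, Sum.elim_inr]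
      have e1 := erase_sum_eq a i
      have e2 := erase_sum_eq b i
      have e3 := erase_sum_eq a j
      have := hab i
      have := (haB j).1
      have := i.isLt
      omega
    · have hij : i ≠ j := huv
      rw [nbrSum_inl, nbrSum_inr]
      simp only [Sum.elim_inl, Sum.elim_inr]
      have e1 := erase_sum_eq a j
      have e2 := erase_sum_eq b j
      have e3 := erase_sum_eq a i
      have := hab j
      have := (haB i).1
      have := j.isLt
      omega
    · exact absurd huv (by simp [thickSpider])

/-- The thick headless spider of order `q ≥ 2` satisfies `η(G) = ⌈(q + 1)/2⌉`. -/
theorem eta_thickSpider (q : ℕ) (hq : 2 ≤ q) :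
    eta (thickSpider q) = (q + 1) ⌈/⌉ 2 := by
  classical
  have hceil : (q + 1) ⌈/⌉ 2 = (q + 2) / 2 := by
    rw [Nat.ceilDiv_eq_add_pred_div]
    omega
  rw [hceil]
  obtain ⟨f0, hf0⟩ := thickSpider_coloring q hq
  apply le_antisymm
  · exact Nat.sInf_le ⟨f0, hf0⟩
  · have hne0 : Set.Nonempty {k | ∃ f : Fin q ⊕ Fin q → ℕ,
        IsAdditiveColoring (thickSpider q) k f} := ⟨(q + 2) / 2, f0, hf0⟩
    apply le_csInf hne0
    rintro m ⟨f, hfb, hfadj⟩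
    have hinj : Function.Injective
        (fun i : Fin q => f (Sum.inl i) + f (Sum.inr i)) := by
      intro i j hsij
      by_contra hij
      have hadj : (thickSpider q).Adj (Sum.inl i) (Sum.inl j) := hij
      have hne := hfadj _ _ hadj
      rw [nbrSum_inl, nbrSum_inl] at hne
      have e1 := erase_sum_eq (fun t => f (Sum.inl t)) i
      have e2 := erase_sum_eq (fun t => f (Sum.inr t)) i
      have e3 := erase_sum_eq (fun t => f (Sum.inl t)) j
      have e4 := erase_sum_eq (fun t => f (Sum.inr t)) j
      simp only at e1 e2 e3 e4 hne hsij
      exact hne (by omega)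
    have hmaps : ∀ i ∈ (univ : Finset (Fin q)),
        (fun i : Fin q => f (Sum.inl i) + f (Sum.inr i)) i ∈ Finset.Icc 2 (2 * m) := by
      intro i _
      have h1 := hfb (Sum.inl i)
      have h2 := hfb (Sum.inr i)
      simp only [Finset.mem_Icc]
      omega
    have hcard := Finset.card_le_card_of_injOn _ hmaps (hinj.injOn)
    rw [Finset.card_univ, Fintype.card_fin, Nat.card_Icc] at hcard
    omega
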